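/- Let α be a real number with 0 < α < π. Then for every real ξ > 0, one has −1 < F̃(ξ,α) < −2α(2π−α)/(α² + (2π−α)²); moreover F̃(ξ,α) tends to −1 as ξ → +∞. In particular the value −1 is never attained by F̃(·,α) on (0,∞). -/

import Mathlib

open Real Filter

/-- The hyperbolic dispersion function of the corner transmission problem. -/
noncomputable def Ftilde (ξ α : ℝ) : ℝ :=
  Real.sinh (α * ξ) * Real.sinh ((2 * Real.pi - α) * ξ) /
    (1 - Real.cosh (α * ξ) * Real.cosh ((2 * Real.pi - α) * ξ))

private lemma aux1 {t : ℝ} (ht : 0 < t) : Real.sinh t < t * Real.cosh t := by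
  have hmono : StrictMonoOn (fun t => t * Real.cosh t - Real.sinh t) (Set.Ici 0) := by
    apply strictMonoOn_of_deriv_pos (convex_Ici 0)
    · exact ((continuous_id.mul Real.continuous_cosh).sub Real.continuous_sinh).continuousOn
    · intro x hx
      rw [interior_Ici] at hx
      have hd : HasDerivAt (fun t => t * Real.cosh t - Real.sinh t) (x * Real.sinh x) x := by
        have h1 := (hasDerivAt_id x).mul (Real.hasDerivAt_cosh x)
        have h2 := Real.hasDerivAt_sinh x
        exact (h1.sub h2).congr_deriv (by simp only [id, one_mul]; ring)
      rw [hd.deriv]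
      exact mul_pos hx (Real.sinh_pos_iff.2 hx)
  have h := hmono (Set.self_mem_Ici) (Set.mem_Ici.2 ht.le) ht
  simpa using h

private lemma aux2 : StrictMonoOn (fun t => Real.sinh t / t) (Set.Ioi 0) := by
  apply strictMonoOn_of_deriv_pos (convex_Ioi 0)
  · exact Real.continuous_sinh.continuousOn.div continuousOn_id
      (fun x hx => ne_of_gt (Set.mem_Ioi.1 hx))
  · intro x hx
    rw [interior_Ioi] at hx
    have hx0 : (x : ℝ) ≠ 0 := ne_of_gt hx
    have hd : HasDerivAt (fun t => Real.sinh t / t)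
        ((Real.cosh x * x - Real.sinh x * 1) / x ^ 2) x :=
      (Real.hasDerivAt_sinh x).div (hasDerivAt_id x) hx0
    rw [hd.deriv]
    apply div_pos
    · have := aux1 hx
      nlinarith
    · positivity

private lemma cosh_as_sinh_half (x : ℝ) : Real.cosh x = 1 + 2 * Real.sinh (x / 2) ^ 2 := by
  have h := Real.cosh_two_mul (x / 2)
  have h2 := Real.cosh_sq (x / 2)
  have hx : 2 * (x / 2) = x := by ring
  rw [hx] at h
  rw [h, h2]; ring

private lemma keylem {d s : ℝ} (hd : 0 < d) (hds : d < s) :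
    s ^ 2 * (Real.cosh d - 1) < d ^ 2 * (Real.cosh s - 1) := by
  have hd2 : (0 : ℝ) < d / 2 := by linarith
  have hs2 : (0 : ℝ) < s / 2 := by linarith
  have h2 := aux2 (Set.mem_Ioi.2 hd2) (Set.mem_Ioi.2 hs2) (by linarith : d / 2 < s / 2)
  simp only at h2
  rw [div_lt_div_iff₀ hd2 hs2] at h2
  have hp1 : 0 < Real.sinh (d / 2) := Real.sinh_pos_iff.2 hd2
  have hp2 : 0 < Real.sinh (s / 2) := Real.sinh_pos_iff.2 hs2
  rw [cosh_as_sinh_half d, cosh_as_sinh_half s]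
  nlinarith [h2, mul_pos hp1 hs2, mul_pos hp2 hd2, sq_nonneg (Real.sinh (s/2) * (d/2) - Real.sinh (d/2) * (s/2))]

theorem hyperbolic_dispersion_range
    (α : ℝ) (hα0 : 0 < α) (hαπ : α < Real.pi) :
    (∀ ξ : ℝ, 0 < ξ →
      -1 < Ftilde ξ α ∧
      Ftilde ξ α < -2 * α * (2 * Real.pi - α) / (α ^ 2 + (2 * Real.pi - α) ^ 2)) ∧
    Filter.Tendsto (fun ξ => Ftilde ξ α) Filter.atTop (nhds (-1)) := by
  have hβ : 0 < 2 * Real.pi - α := by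
    have := Real.pi_pos
    linarith
  have hαβ : α < 2 * Real.pi - α := by linarith
  constructor
  · intro ξ hξ
    set a := α * ξ with ha_def
    set b := (2 * Real.pi - α) * ξ with hb_def
    have ha : 0 < a := mul_pos hα0 hξ
    have hb : 0 < b := mul_pos hβ hξ
    have hab : a < b := by
      rw [ha_def, hb_def]
      exact mul_lt_mul_of_pos_right hαβ hξ
    have hca : 1 < Real.cosh a := Real.one_lt_cosh.2 ha.ne'
    have hcb : 1 < Real.cosh b := Real.one_lt_cosh.2 hb.ne'
    have hDneg : 1 - Real.cosh a * Real.cosh b < 0 := by nlinarith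
    constructor
    · rw [Ftilde, ← ha_def, ← hb_def, lt_div_iff_of_neg hDneg]
      have hsub := Real.cosh_sub a b
      have h1 : 1 < Real.cosh (a - b) := Real.one_lt_cosh.2 (sub_ne_zero.2 hab.ne)
      nlinarith
    · have hkey := keylem (show 0 < b - a by linarith) (show b - a < a + b by linarith)
      have hadd := Real.cosh_add a b
      have hsub := Real.cosh_sub b a
      have H : 2 * a * b * (Real.cosh a * Real.cosh b - 1) <
          (a ^ 2 + b ^ 2) * (Real.sinh a * Real.sinh b) := by nlinarith
      have H2 : 2 * α * (2 * Real.pi - α) * (Real.cosh a * Real.cosh b - 1) <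
          (α ^ 2 + (2 * Real.pi - α) ^ 2) * (Real.sinh a * Real.sinh b) := by
        have hξ2 : 0 < ξ ^ 2 := by positivity
        rw [ha_def, hb_def] at H
        nlinarith [H]
      have hP : 0 < α ^ 2 + (2 * Real.pi - α) ^ 2 := by positivity
      rw [Ftilde, ← ha_def, ← hb_def, div_lt_iff_of_neg hDneg, div_mul_eq_mul_div,
        div_lt_iff₀ hP]
      nlinarith [H2]
  · -- the limit
    have hEq : ∀ ξ : ℝ, 0 < ξ → Ftilde ξ α =
        ((1 - Real.exp (-(α * ξ)) ^ 2) * (1 - Real.exp (-((2 * Real.pi - α) * ξ)) ^ 2)) /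
        (4 * (Real.exp (-(α * ξ)) * Real.exp (-((2 * Real.pi - α) * ξ))) -
          (1 + Real.exp (-(α * ξ)) ^ 2) * (1 + Real.exp (-((2 * Real.pi - α) * ξ)) ^ 2)) := by
      intro ξ hξ
      set a := α * ξ
      set b := (2 * Real.pi - α) * ξ
      have hc : (4 * (Real.exp (-a) * Real.exp (-b))) ≠ 0 := by positivity
      rw [Ftilde]
      rw [← mul_div_mul_right (c := 4 * (Real.exp (-a) * Real.exp (-b))) _ _ hc]
      congr 1
      · rw [Real.sinh_eq, Real.sinh_eq, Real.exp_neg a, Real.exp_neg b]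
        field_simp
        simp only [a, b]
        ring_nf
      · rw [Real.cosh_eq, Real.cosh_eq, Real.exp_neg a, Real.exp_neg b]
        field_simp
        simp only [a, b]
        ring_nf
    have hlima : Tendsto (fun ξ : ℝ => Real.exp (-(α * ξ))) atTop (nhds 0) := by
      apply Real.tendsto_exp_atBot.comp
      apply tendsto_neg_atTop_atBot.comp
      exact (tendsto_id.const_mul_atTop hα0)
    have hlimb : Tendsto (fun ξ : ℝ => Real.exp (-((2 * Real.pi - α) * ξ))) atTop (nhds 0) := by
      apply Real.tendsto_exp_atBot.comp
      apply tendsto_neg_atTop_atBot.comp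
      exact (tendsto_id.const_mul_atTop hβ)
    have hnum : Tendsto (fun ξ : ℝ =>
        (1 - Real.exp (-(α * ξ)) ^ 2) * (1 - Real.exp (-((2 * Real.pi - α) * ξ)) ^ 2))
        atTop (nhds 1) := by
      have := ((tendsto_const_nhds (x := (1:ℝ))).sub (hlima.pow 2)).mul
        ((tendsto_const_nhds (x := (1:ℝ))).sub (hlimb.pow 2))
      simpa using this
    have hden : Tendsto (fun ξ : ℝ =>
        4 * (Real.exp (-(α * ξ)) * Real.exp (-((2 * Real.pi - α) * ξ))) -
          (1 + Real.exp (-(α * ξ)) ^ 2) * (1 + Real.exp (-((2 * Real.pi - α) * ξ)) ^ 2))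
        atTop (nhds (-1)) := by
      have := (((tendsto_const_nhds (x := (4:ℝ))).mul (hlima.mul hlimb)).sub
        (((tendsto_const_nhds (x := (1:ℝ))).add (hlima.pow 2)).mul
          ((tendsto_const_nhds (x := (1:ℝ))).add (hlimb.pow 2))))
      simpa using this
    have hdiv := hnum.div hden (by norm_num : (-1 : ℝ) ≠ 0)
    simp only [one_div] at hdiv
    have : (1 : ℝ) / (-1) = -1 := by norm_num
    have hdiv' : Tendsto (fun ξ : ℝ =>
        ((1 - Real.exp (-(α * ξ)) ^ 2) * (1 - Real.exp (-((2 * Real.pi - α) * ξ)) ^ 2)) /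
        (4 * (Real.exp (-(α * ξ)) * Real.exp (-((2 * Real.pi - α) * ξ))) -
          (1 + Real.exp (-(α * ξ)) ^ 2) * (1 + Real.exp (-((2 * Real.pi - α) * ξ)) ^ 2)))
        atTop (nhds (-1)) := by
      convert hnum.div hden (by norm_num : (-1 : ℝ) ≠ 0) using 2
      norm_num
      norm_num
    apply hdiv'.congr'
    filter_upwards [eventually_gt_atTop (0 : ℝ)] with ξ hξ
    exact (hEq ξ hξ).symm
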